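/- Let n ≥ 1 be a natural number, p₀ ∈ (1, ∞), and s₀ ∈ ℝ with s₀ ≥ 1 + n/p₀. Then there exist t ∈ ℝ and r ∈ (1, ∞) such that (t, r) ∈ 𝔻(𝓐) ∩ 𝔻(L) (i.e. t > 1/r and t + s₀ > 1 + max(0, n/p₀ + n/r − n)) but (t, r) ∉ 𝔻(N) (i.e. it is not the case that both t > 1/2 + max(0, n/r − n/2) and t > n/r − 1 hold). Hence for sufficiently regular a priori data the parametrix method applies to target spaces outside the domain 𝔻(N) accessible to boot-strap arguments. -/
import Mathlib

/-- For sufficiently regular a priori data (`s₀ ≥ 1 + n/p₀`) there are target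
parameters `(t, r)` in `𝔻(𝓐) ∩ 𝔻(L)` but outside `𝔻(N)`. -/
theorem beyond_bootstrap
    (n : ℕ) (hn : 1 ≤ n) (p₀ s₀ : ℝ) (hp₀ : 1 < p₀)
    (hs₀ : s₀ ≥ 1 + (n : ℝ) / p₀) :
    ∃ t r : ℝ, 1 < r ∧ t > 1 / r ∧
      t + s₀ > 1 + max 0 ((n : ℝ) / p₀ + n / r - n) ∧
      ¬ (t > 1 / 2 + max 0 ((n : ℝ) / r - n / 2) ∧ t > (n : ℝ) / r - 1) := by
  refine ⟨1/2, 4, by norm_num, by norm_num, ?_, ?_⟩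
  · have hn0 : (0:ℝ) ≤ n := Nat.cast_nonneg n
    have hdiv : (0:ℝ) ≤ (n : ℝ) / p₀ := div_nonneg hn0 (by linarith)
    have h1 : (n:ℝ)/p₀ + n/4 - n ≤ (n:ℝ)/p₀ := by linarith
    have h2 : max 0 ((n:ℝ)/p₀ + (n:ℝ)/4 - n) ≤ (n:ℝ)/p₀ := max_le hdiv h1
    linarith
  · rintro ⟨h, -⟩
    have := le_max_left 0 ((n:ℝ)/4 - (n:ℝ)/2)
    linarith
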